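/- Let C ⊆ ℝⁿ be a nonempty compact convex set such that every minimal nonempty face of C contains an integral point. Then for every w ∈ ℝⁿ, the maximum of ⟨w, x⟩ over x ∈ C is attained at some integral point of C. -/
import Mathlib

/-- `F` is a face of the convex set `C`. -/
def IsFaceOf {n : ℕ} (C F : Set (Fin n → ℝ)) : Prop :=
  F ⊆ C ∧ Convex ℝ F ∧
    ∀ x ∈ C, ∀ y ∈ C, (openSegment ℝ x y ∩ F).Nonempty → x ∈ F ∧ y ∈ F

/-- `F` is a minimal (nonempty) face of `C`: it is a nonempty face containing
no other nonempty face. -/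
def IsMinimalFaceOf {n : ℕ} (C F : Set (Fin n → ℝ)) : Prop :=
  IsFaceOf C F ∧ F.Nonempty ∧
    ∀ F' : Set (Fin n → ℝ), IsFaceOf C F' → F'.Nonempty → F' ⊆ F → F' = F

lemma face_trans {n : ℕ} {C F F' : Set (Fin n → ℝ)}
    (h1 : IsFaceOf C F) (h2 : IsFaceOf F F') : IsFaceOf C F' := by
  obtain ⟨hFC, _, hF⟩ := h1
  obtain ⟨hF'F, hF'c, hF'⟩ := h2
  refine ⟨hF'F.trans hFC, hF'c, fun x hx y hy hseg => ?_⟩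
  obtain ⟨hxF, hyF⟩ := hF x hx y hy (hseg.mono (Set.inter_subset_inter_right _ hF'F))
  exact hF' x hxF y hyF hseg

lemma lin_comb {n : ℕ} (w x y : Fin n → ℝ) (a b : ℝ) :
    (∑ i, w i * (a • x + b • y) i) = a * (∑ i, w i * x i) + b * (∑ i, w i * y i) := by
  simp only [Pi.add_apply, Pi.smul_apply, smul_eq_mul, mul_add, Finset.sum_add_distrib,
    Finset.mul_sum]
  congr 1 <;> exact Finset.sum_congr rfl fun i _ => by ring

lemma cont_lin {n : ℕ} (w : Fin n → ℝ) : Continuous fun x : Fin n → ℝ => ∑ i, w i * x i :=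
  continuous_finset_sum _ fun i _ => continuous_const.mul (continuous_apply i)

/-- argmax set is a nonempty compact face -/
lemma argmax_face {n : ℕ} {C : Set (Fin n → ℝ)} (hne : C.Nonempty)
    (hconv : Convex ℝ C) (hcomp : IsCompact C) (w : Fin n → ℝ) :
    ∃ F : Set (Fin n → ℝ), IsFaceOf C F ∧ F.Nonempty ∧ IsCompact F ∧
      ∀ x ∈ F, ∀ y ∈ C, (∑ i, w i * y i) ≤ ∑ i, w i * x i := by
  set f : (Fin n → ℝ) → ℝ := fun x => ∑ i, w i * x i with hf
  obtain ⟨x₀, hx₀C, hx₀max⟩ := hcomp.exists_isMaxOn hne (cont_lin w).continuousOn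
  have hx₀ : ∀ y ∈ C, f y ≤ f x₀ := fun y hy => hx₀max hy
  set F : Set (Fin n → ℝ) := C ∩ {x | f x₀ ≤ f x} with hFdef
  have hFC : F ⊆ C := fun x hx => hx.1
  have hmax : ∀ x ∈ F, ∀ y ∈ C, f y ≤ f x := fun x hx y hy => (hx₀ y hy).trans hx.2
  refine ⟨F, ⟨hFC, ?_, ?_⟩, ⟨x₀, hx₀C, le_refl (f x₀)⟩, ?_, hmax⟩
  · intro x hx y hy a b ha hb hab
    refine ⟨hconv hx.1 hy.1 ha hb hab, ?_⟩
    show f x₀ ≤ f (a • x + b • y)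
    have h1 : f (a • x + b • y) = a * f x + b * f y := lin_comb w x y a b
    have h2 : a * f x₀ ≤ a * f x := mul_le_mul_of_nonneg_left hx.2 ha
    have h3 : b * f x₀ ≤ b * f y := mul_le_mul_of_nonneg_left hy.2 hb
    have hmm : a * f x₀ + b * f x₀ = f x₀ := by rw [← add_mul, hab, one_mul]
    linarith
  · rintro x hx y hy ⟨z, hzseg, hzC, hzF⟩
    obtain ⟨a, b, ha, hb, hab, hz⟩ := hzseg
    have hzx : f z = a * f x + b * f y := by rw [← hz]; exact lin_comb w x y a b
    have hfx : f x ≤ f x₀ := hx₀ x hx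
    have hfy : f y ≤ f x₀ := hx₀ y hy
    have hzval : f x₀ ≤ f z := hzF
    have hmm : a * f x₀ + b * f x₀ = f x₀ := by rw [← add_mul, hab, one_mul]
    constructor
    · refine ⟨hx, ?_⟩
      show f x₀ ≤ f x
      by_contra h
      push_neg at h
      have h1 : a * f x < a * f x₀ := mul_lt_mul_of_pos_left h ha
      have h2 : b * f y ≤ b * f x₀ := mul_le_mul_of_nonneg_left hfy hb.le
      have : f x₀ ≤ f z := hzval
      linarith
    · refine ⟨hy, ?_⟩
      show f x₀ ≤ f y
      by_contra h
      push_neg at h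
      have h1 : b * f y < b * f x₀ := mul_lt_mul_of_pos_left h hb
      have h2 : a * f x ≤ a * f x₀ := mul_le_mul_of_nonneg_left hfx ha.le
      have : f x₀ ≤ f z := hzval
      linarith
  · exact hcomp.of_isClosed_subset
      (hcomp.isClosed.inter (isClosed_le continuous_const (cont_lin w))) hFC

lemma singleton_minimal {n : ℕ} {C : Set (Fin n → ℝ)} {p : Fin n → ℝ}
    (h : IsFaceOf C {p}) : IsMinimalFaceOf C {p} := by
  refine ⟨h, ⟨p, rfl⟩, fun F' _ hne' hsub => ?_⟩
  obtain ⟨q, hq⟩ := hne'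
  have : q = p := hsub hq
  subst this
  exact Set.eq_singleton_iff_nonempty_unique_mem.2 ⟨⟨q, hq⟩, fun y hy => hsub hy⟩


lemma span_coord {n : ℕ} {s : Set (Fin n → ℝ)} {i : Fin n} {m : ℝ}
    (h : ∀ x ∈ s, x i = m) : ∀ y ∈ affineSpan ℝ s, y i = m := by
  intro y hy
  refine affineSpan_induction (p := fun z => z i = m) hy h fun c u v q hu hv hq => ?_
  simp only [vsub_eq_sub, vadd_eq_add, Pi.add_apply, Pi.smul_apply, Pi.sub_apply,
    smul_eq_mul] at hu hv hq ⊢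
  rw [hu, hv, hq]; ring

lemma rank_lt {n : ℕ} {F F' : Set (Fin n → ℝ)} (hsub : F' ⊆ F) (hne' : F'.Nonempty)
    {p : Fin n → ℝ} (hpF : p ∈ F) (hp : p ∉ affineSpan ℝ F') :
    Module.finrank ℝ (affineSpan ℝ F').direction <
      Module.finrank ℝ (affineSpan ℝ F).direction := by
  have hle : affineSpan ℝ F' ≤ affineSpan ℝ F := affineSpan_mono ℝ hsub
  apply Submodule.finrank_lt_finrank_of_lt
  refine lt_of_le_of_ne (AffineSubspace.direction_le hle) fun hdeq => ?_
  obtain ⟨q, hq⟩ := hne'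
  have hspan : affineSpan ℝ F' = affineSpan ℝ F :=
    AffineSubspace.eq_of_direction_eq_of_nonempty_of_le hdeq
      ⟨q, subset_affineSpan ℝ F' hq⟩ hle
  exact hp (hspan ▸ subset_affineSpan ℝ F hpF)

/-- main induction on dimension -/
lemma main_ind {n : ℕ} {C : Set (Fin n → ℝ)}
    (hmin : ∀ F : Set (Fin n → ℝ), IsMinimalFaceOf C F →
      ∃ x ∈ F, ∀ i, ∃ k : ℤ, x i = (k : ℝ)) :
    ∀ d : ℕ, ∀ F : Set (Fin n → ℝ), IsFaceOf C F → F.Nonempty →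
      IsCompact F → Module.finrank ℝ (affineSpan ℝ F).direction ≤ d →
      ∃ x ∈ F, ∀ i, ∃ k : ℤ, x i = (k : ℝ) := by
  intro d
  induction d with
  | zero =>
    intro F hface hne hcomp hdim
    obtain ⟨p, hp⟩ := hne
    have hsub : F.Subsingleton := by
      intro a ha b hb
      by_contra hab
      obtain ⟨i, hi⟩ : ∃ i, a i ≠ b i := Function.ne_iff.mp hab
      have hdir : a -ᵥ b ∈ (affineSpan ℝ F).direction :=
        AffineSubspace.vsub_mem_direction (subset_affineSpan ℝ F ha)
          (subset_affineSpan ℝ F hb)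
      have hbot : (affineSpan ℝ F).direction = ⊥ :=
        Submodule.finrank_eq_zero.mp (Nat.le_zero.mp hdim)
      rw [hbot, Submodule.mem_bot] at hdir
      exact hi (by have := congrFun hdir i; simpa [sub_eq_zero] using this)
    have hFp : F = {p} := hsub.eq_singleton_of_mem hp
    rw [hFp] at hface ⊢
    exact hmin _ (singleton_minimal hface)
  | succ d ih =>
    intro F hface hne hcomp hdim
    by_cases hsub : F.Subsingleton
    · obtain ⟨p, hp⟩ := hne
      have hFp : F = {p} := hsub.eq_singleton_of_mem hp
      rw [hFp] at hface ⊢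
      exact hmin _ (singleton_minimal hface)
    · rw [Set.not_subsingleton_iff] at hsub
      obtain ⟨a, haF, b, hbF, hab⟩ := hsub
      obtain ⟨i, hi⟩ : ∃ i, a i ≠ b i := Function.ne_iff.mp hab
      set w' : Fin n → ℝ := fun j => if j = i then 1 else 0 with hw'def
      have hw' : ∀ x : Fin n → ℝ, (∑ j, w' j * x j) = x i := by
        intro x
        simp [hw'def, ite_mul, Finset.sum_ite_eq']
      obtain ⟨F₁, hF₁face, hF₁ne, hF₁comp, hF₁max⟩ :=
        argmax_face (C := F) hne hface.2.1 hcomp w'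
      have hF₁C : IsFaceOf C F₁ := face_trans hface hF₁face
      have hF₁F : F₁ ⊆ F := hF₁face.1
      obtain ⟨x₁, hx₁⟩ := hF₁ne
      set m := x₁ i with hm
      have hcoord : ∀ x ∈ F₁, x i = m := by
        intro x hx
        have h1 := hF₁max x hx x₁ (hF₁F hx₁)
        have h2 := hF₁max x₁ hx₁ x (hF₁F hx)
        rw [hw', hw'] at h1 h2
        exact le_antisymm h2 h1
      have hmle : ∀ y ∈ F, y i ≤ m := by
        intro y hy
        have := hF₁max x₁ hx₁ y hy
        rwa [hw', hw'] at this
      have key : ∀ p : Fin n → ℝ, p ∈ F → p i < m →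
          ∃ x ∈ F, ∀ i, ∃ k : ℤ, x i = (k : ℝ) := by
        intro p hpF hpm
        have hpspan : p ∉ affineSpan ℝ F₁ :=
          fun hmem => absurd (span_coord hcoord p hmem) (ne_of_lt hpm)
        have hrk := rank_lt hF₁F ⟨x₁, hx₁⟩ hpF hpspan
        have hd : Module.finrank ℝ (affineSpan ℝ F₁).direction ≤ d := by omega
        obtain ⟨x, hxF₁, hint⟩ := ih F₁ hF₁C ⟨x₁, hx₁⟩ hF₁comp hd
        exact ⟨x, hF₁F hxF₁, hint⟩
      rcases hi.lt_or_gt with hlt | hlt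
      · exact key a haF (lt_of_lt_of_le hlt (hmle b hbF))
      · exact key b hbF (lt_of_lt_of_le hlt (hmle a haF))

theorem stmt_3 (n : ℕ) (C : Set (Fin n → ℝ)) (hne : C.Nonempty)
    (hconv : Convex ℝ C) (hcomp : IsCompact C)
    (hmin : ∀ F : Set (Fin n → ℝ), IsMinimalFaceOf C F →
      ∃ x ∈ F, ∀ i, ∃ k : ℤ, x i = (k : ℝ)) :
    ∀ w : Fin n → ℝ, ∃ x ∈ C, (∀ i, ∃ k : ℤ, x i = (k : ℝ)) ∧
      ∀ y ∈ C, (∑ i, w i * y i) ≤ ∑ i, w i * x i := by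
  intro w
  obtain ⟨F, hFface, hFne, hFcomp, hFmax⟩ := argmax_face hne hconv hcomp w
  obtain ⟨x, hxF, hint⟩ := main_ind hmin
    (Module.finrank ℝ (affineSpan ℝ F).direction) F hFface hFne hFcomp le_rfl
  exact ⟨x, hFface.1 hxF, hint, fun y hy => hFmax x hxF y hy⟩
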